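/- Let $(Q,\mu)$ be a finite measure space, $m < M$, $\alpha > 0$, $g \in L^2(Q)$, and let $u$ be measurable with $m \le u \le M$ a.e. and $\int_Q (\alpha u + g)(v - u)\,d\mu \ge 0$ for all measurable $v$ with $m \le v \le M$ a.e. Then a.e.: $u = m$ on $\{\alpha u + g > 0\}$, $u = M$ on $\{\alpha u + g < 0\}$, and hence $u = \min(\max(m, -g/\alpha), M)$ a.e. -/

import Mathlib

open MeasureTheory

lemma vip_aux {Q : Type*} [MeasureSpace Q] [IsFiniteMeasure (volume : Measure Q)]
    (m M c : ℝ) (hc1 : m ≤ c) (hc2 : c ≤ M)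
    (w u : Q → ℝ) (humeas : Measurable u)
    (hw2 : MemLp w 2 volume) (hu2 : MemLp u 2 volume)
    (hbounds : ∀ᵐ x ∂(volume : Measure Q), m ≤ u x ∧ u x ≤ M)
    (S : Set Q) (hS : MeasurableSet S)
    (hsign : ∀ᵐ x ∂(volume : Measure Q), x ∈ S → w x * (c - u x) ≤ 0)
    (hVI : ∀ v : Q → ℝ, Measurable v →
      (∀ᵐ x ∂(volume : Measure Q), m ≤ v x ∧ v x ≤ M) →
      0 ≤ ∫ x, w x * (v x - u x)) :
    ∀ᵐ x ∂(volume : Measure Q), x ∈ S → w x * (c - u x) = 0 := by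
  classical
  set v : Q → ℝ := S.piecewise (fun _ => c) u with hv
  have hvmeas : Measurable v := Measurable.piecewise hS measurable_const humeas
  set f : Q → ℝ := S.indicator (fun x => w x * (c - u x)) with hf
  have heq : (fun x => w x * (v x - u x)) = f := by
    ext x
    by_cases hx : x ∈ S <;> simp [hv, hf, Set.piecewise, Set.indicator, hx]
  have hmul : Integrable (fun x => (c - u x) * w x) volume := by
    refine Integrable.bdd_mul (hw2.integrable one_le_two)
      (aestronglyMeasurable_const.sub humeas.aestronglyMeasurable) (c := |c| + max |m| |M|) ?_
    filter_upwards [hbounds] with x hx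
    rw [Real.norm_eq_abs]
    have h1 : |c - u x| ≤ |c| + |u x| := abs_sub c (u x)
    have h2 : |u x| ≤ max |m| |M| := by
      rw [abs_le]
      constructor
      · have := neg_abs_le m
        have := le_max_left |m| |M|
        linarith [hx.1]
      · have := le_abs_self M
        have := le_max_right |m| |M|
        linarith [hx.2]
    linarith
  have hint : Integrable f volume := by
    refine Integrable.indicator ?_ hS
    simpa [mul_comm] using hmul
  have hge : 0 ≤ ∫ x, f x := by
    have hb : ∀ᵐ x ∂(volume : Measure Q), m ≤ v x ∧ v x ≤ M := by
      filter_upwards [hbounds] with x hx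
      by_cases hxS : x ∈ S <;> simp [hv, Set.piecewise, hxS, hc1, hc2, hx.1, hx.2]
    have := hVI v hvmeas hb
    rwa [heq] at this
  have hle : ∀ᵐ x ∂(volume : Measure Q), f x ≤ 0 := by
    filter_upwards [hsign] with x hx
    by_cases hxS : x ∈ S
    · rw [hf, Set.indicator_of_mem hxS]
      exact hx hxS
    · simp [hf, Set.indicator_of_notMem hxS]
  have hzero : ∫ x, f x = 0 := le_antisymm (integral_nonpos_of_ae hle) hge
  have hnegint : ∫ x, -f x = 0 := by rw [integral_neg, hzero, neg_zero]
  have haez := (integral_eq_zero_iff_of_nonneg_ae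
      (by filter_upwards [hle] with x hx; simpa using hx) hint.neg).mp hnegint
  filter_upwards [haez] with x hx hxS
  have h0 : f x = 0 := by
    have : -f x = 0 := hx
    linarith
  rw [hf, Set.indicator_of_mem hxS] at h0
  exact h0

/-- the integral variational inequality forces the pointwise
projection structure. -/
theorem variational_implies_projection {Q : Type*} [MeasureSpace Q]
    [IsFiniteMeasure (volume : Measure Q)]
    (m M α : ℝ) (hm : m < M) (hα : 0 < α)
    (g : Q → ℝ) (hg : MemLp g 2 volume)
    (u : Q → ℝ) (humeas : Measurable u)
    (hbounds : ∀ᵐ x ∂(volume : Measure Q), m ≤ u x ∧ u x ≤ M)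
    (hVI : ∀ v : Q → ℝ, Measurable v →
      (∀ᵐ x ∂(volume : Measure Q), m ≤ v x ∧ v x ≤ M) →
      0 ≤ ∫ x, (α * u x + g x) * (v x - u x)) :
    ∀ᵐ x ∂(volume : Measure Q),
      (0 < α * u x + g x → u x = m) ∧
      (α * u x + g x < 0 → u x = M) ∧
      u x = min (max m (-g x / α)) M := by
  have hu2 : MemLp u 2 volume := by
    refine MemLp.of_bound humeas.aestronglyMeasurable (max |m| |M|) ?_
    filter_upwards [hbounds] with x hx
    rw [Real.norm_eq_abs, abs_le]
    refine ⟨?_, ?_⟩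
    · have h1 : -|m| ≤ m := neg_abs_le m
      have h2 := le_max_left |m| |M|
      linarith [hx.1]
    · have h1 : M ≤ |M| := le_abs_self M
      have h2 := le_max_right |m| |M|
      linarith [hx.2]
  -- measurable version of g
  set g' : Q → ℝ := hg.aestronglyMeasurable.mk g with hg'def
  have hg'meas : Measurable g' := hg.aestronglyMeasurable.measurable_mk
  have hgg' : g =ᵐ[volume] g' := hg.aestronglyMeasurable.ae_eq_mk
  have hg'2 : MemLp g' 2 volume := hg.ae_eq hgg'
  set w : Q → ℝ := fun x => α * u x + g' x with hwdef
  have hwmeas : Measurable w := (humeas.const_mul α).add hg'meas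
  have hw2 : MemLp w 2 volume := (hu2.const_mul α).add hg'2
  have hwae : ∀ᵐ x ∂(volume : Measure Q), α * u x + g x = w x := by
    filter_upwards [hgg'] with x hx
    simp [hwdef, hx]
  have hVI' : ∀ v : Q → ℝ, Measurable v →
      (∀ᵐ x ∂(volume : Measure Q), m ≤ v x ∧ v x ≤ M) →
      0 ≤ ∫ x, w x * (v x - u x) := by
    intro v hv hvb
    have h0 := hVI v hv hvb
    have heq : ∫ x, (α * u x + g x) * (v x - u x) = ∫ x, w x * (v x - u x) := by
      refine integral_congr_ae ?_
      filter_upwards [hwae] with x hx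
      rw [hx]
    linarith [heq ▸ h0]
  have hS : MeasurableSet {x : Q | 0 < w x} := measurableSet_lt measurable_const hwmeas
  have hT : MeasurableSet {x : Q | w x < 0} := measurableSet_lt hwmeas measurable_const
  have hsign1 : ∀ᵐ x ∂(volume : Measure Q), x ∈ {x : Q | 0 < w x} → w x * (m - u x) ≤ 0 := by
    filter_upwards [hbounds] with x hx hxS
    have h1 : 0 < w x := hxS
    have h2 : m - u x ≤ 0 := by linarith [hx.1]
    exact mul_nonpos_of_nonneg_of_nonpos h1.le h2
  have hsign2 : ∀ᵐ x ∂(volume : Measure Q), x ∈ {x : Q | w x < 0} → w x * (M - u x) ≤ 0 := by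
    filter_upwards [hbounds] with x hx hxT
    have h1 : w x < 0 := hxT
    have h2 : 0 ≤ M - u x := by linarith [hx.2]
    exact mul_nonpos_of_nonpos_of_nonneg h1.le h2
  have ae1 := vip_aux m M m le_rfl hm.le w u humeas hw2 hu2 hbounds _ hS hsign1 hVI'
  have ae2 := vip_aux m M M hm.le le_rfl w u humeas hw2 hu2 hbounds _ hT hsign2 hVI'
  filter_upwards [hbounds, ae1, ae2, hwae] with x hx h1 h2 hwx
  have hux1 : m ≤ u x := hx.1
  have hux2 : u x ≤ M := hx.2
  have key1 : 0 < α * u x + g x → u x = m := by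
    intro hpos
    have hxS : x ∈ {x : Q | 0 < w x} := by
      simp only [Set.mem_setOf_eq, ← hwx]; exact hpos
    rcases mul_eq_zero.mp (h1 hxS) with h | h
    · exact absurd h (ne_of_gt hxS)
    · linarith
  have key2 : α * u x + g x < 0 → u x = M := by
    intro hneg
    have hxT : x ∈ {x : Q | w x < 0} := by
      simp only [Set.mem_setOf_eq, ← hwx]; exact hneg
    rcases mul_eq_zero.mp (h2 hxT) with h | h
    · exact absurd h (ne_of_lt hxT)
    · linarith
  refine ⟨key1, key2, ?_⟩
  rcases lt_trichotomy (α * u x + g x) 0 with h | h | h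
  · have hu := key2 h
    have hM : M < -g x / α := by
      rw [lt_div_iff₀ hα]
      rw [hu] at h
      linarith
    rw [max_eq_right (by linarith : m ≤ -g x / α), min_eq_right hM.le, hu]
  · have hux : u x = -g x / α := by
      field_simp
      linarith
    rw [max_eq_right (by rw [← hux]; exact hux1), min_eq_left (by rw [← hux]; exact hux2), hux]
  · have hu := key1 h
    have hmle : -g x / α ≤ m := by
      rw [div_le_iff₀ hα]
      rw [hu] at h
      linarith
    rw [max_eq_left hmle, min_eq_left hm.le, hu]
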